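/- Let R ⊆ ℚ^k be a nonempty semilinear set. Suppose that for every rational δ with 0 < δ < 1 there exists a semilinear set U_δ ⊆ ℚ with 1 ∈ U_δ and U_δ ⊆ (1−δ, 1+δ) such that, for all a, b ∈ ℚ^k, the unary set T = {y ∈ ℚ | there exists t ∈ U_δ with y•a + (t−y)•b ∈ R} does not exclude an interval. Then R is dense in its convex hull: for every p in the convex hull of R and every rational ε > 0, there exists x ∈ R with Σᵢ (pᵢ − xᵢ)² < ε². -/

import Mathlib

/-- A linear set in ℚ^n: the solution set of a finite conjunction of linear
inequalities `c₁x₁+…+cₙxₙ ≤ b` or `c₁x₁+…+cₙxₙ < b` with rational coefficients. -/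
def IsLinearSet' (n : ℕ) (S : Set (Fin n → ℚ)) : Prop :=
  ∃ (m : ℕ) (c : Fin m → Fin n → ℚ) (b : Fin m → ℚ) (strict : Fin m → Bool),
    S = {x | ∀ i, if strict i then (∑ j, c i j * x j) < b i else (∑ j, c i j * x j) ≤ b i}

/-- A semilinear set: a finite union of linear sets. -/
def IsSemilinear (n : ℕ) (S : Set (Fin n → ℚ)) : Prop :=
  ∃ (k : ℕ) (f : Fin k → Set (Fin n → ℚ)), (∀ i, IsLinearSet' n (f i)) ∧ S = ⋃ i, f i

/-- A unary semilinear relation: a semilinear subset of ℚ. -/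
def IsSemilinear1 (U : Set ℚ) : Prop :=
  IsSemilinear 1 {v : Fin 1 → ℚ | v 0 ∈ U}

/-- A set S ⊆ ℚ excludes an interval if there are p, q ∈ S and rationals
0 < δ₁ < δ₂ < 1 such that p + (q−p)y ∉ S whenever δ₁ ≤ y ≤ δ₂. -/
def ExcludesInterval (S : Set ℚ) : Prop :=
  ∃ p ∈ S, ∃ q ∈ S, ∃ d1 d2 : ℚ, 0 < d1 ∧ d1 < d2 ∧ d2 < 1 ∧
    ∀ y : ℚ, d1 ≤ y → y ≤ d2 → p + (q - p) * y ∉ S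

/-- The convex hull of S ⊆ ℚ^n: all convex combinations of points of S with
rational coefficients. -/
def convHull' {n : ℕ} (S : Set (Fin n → ℚ)) : Set (Fin n → ℚ) :=
  {x | ∃ (k : ℕ) (w : Fin k → ℚ) (p : Fin k → (Fin n → ℚ)),
    (∀ i, 0 ≤ w i) ∧ (∀ i, p i ∈ S) ∧ (∑ i, w i) = 1 ∧ x = ∑ i, w i • p i}

private lemma bound7 {k : ℕ} (a : Fin k → ℚ) : ∃ A : ℚ, 0 ≤ A ∧ ∀ i, |a i| ≤ A :=
  ⟨∑ i, |a i|, Finset.sum_nonneg fun i _ => abs_nonneg _,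
    fun i => Finset.single_le_sum (fun j _ => abs_nonneg (a j)) (Finset.mem_univ i)⟩

private lemma key7 {k : ℕ} (R : Set (Fin k → ℚ))
    (h : ∀ δ : ℚ, 0 < δ → δ < 1 → ∃ U : Set ℚ, (1 : ℚ) ∈ U ∧
      U ⊆ Set.Ioo (1 - δ) (1 + δ) ∧
      ∀ a b : Fin k → ℚ,
        ¬ ExcludesInterval {y : ℚ | ∃ t ∈ U, y • a + (t - y) • b ∈ R})
    (a : Fin k → ℚ) (ha : a ∈ R) (b : Fin k → ℚ) (hb : b ∈ R)
    (w : ℚ) (hw0 : 0 < w) (hw1 : w < 1) (c : ℚ) (hc : 0 < c) :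
    ∃ x ∈ R, ∀ i, |(w * a i + (1 - w) * b i) - x i| < c := by
  obtain ⟨A, hA0, hAi⟩ := bound7 a
  obtain ⟨B, hB0, hBi⟩ := bound7 b
  obtain ⟨δ, hδ0, hδ1, hδle⟩ : ∃ δ : ℚ, 0 < δ ∧ δ < 1 ∧ δ * (2 * (B + 1)) ≤ c := by
    refine ⟨min (c / (2 * (B + 1))) (1 / 2), lt_min (by positivity) (by norm_num),
      lt_of_le_of_lt (min_le_right _ _) (by norm_num), ?_⟩
    have h1 : min (c / (2 * (B + 1))) (1 / 2) ≤ c / (2 * (B + 1)) := min_le_left _ _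
    have h2 : (0:ℚ) < 2 * (B + 1) := by linarith
    rw [← le_div_iff₀ h2]
    exact h1
  obtain ⟨U, hU1, hUsub, hT⟩ := h δ hδ0 hδ1
  have h0T : (0 : ℚ) ∈ {y : ℚ | ∃ t ∈ U, y • a + (t - y) • b ∈ R} := ⟨1, hU1, by simpa using hb⟩
  have h1T : (1 : ℚ) ∈ {y : ℚ | ∃ t ∈ U, y • a + (t - y) • b ∈ R} := ⟨1, hU1, by simpa using ha⟩
  obtain ⟨η, hη0, hηw, hηw', hηle⟩ :
      ∃ η : ℚ, 0 < η ∧ η < w ∧ η < 1 - w ∧ η * (4 * (A + B + 1)) ≤ c := by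
    refine ⟨min (c / (4 * (A + B + 1))) (min w (1 - w)) / 2, ?_, ?_, ?_, ?_⟩
    · have : 0 < min (c / (4 * (A + B + 1))) (min w (1 - w)) :=
        lt_min (by positivity) (lt_min hw0 (by linarith))
      linarith
    · have h1 : min (c / (4 * (A + B + 1))) (min w (1 - w)) ≤ w :=
        le_trans (min_le_right _ _) (min_le_left _ _)
      have h2 : 0 < min (c / (4 * (A + B + 1))) (min w (1 - w)) :=
        lt_min (by positivity) (lt_min hw0 (by linarith))
      linarith
    · have h1 : min (c / (4 * (A + B + 1))) (min w (1 - w)) ≤ 1 - w :=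
        le_trans (min_le_right _ _) (min_le_right _ _)
      have h2 : 0 < min (c / (4 * (A + B + 1))) (min w (1 - w)) :=
        lt_min (by positivity) (lt_min hw0 (by linarith))
      linarith
    · have h1 : min (c / (4 * (A + B + 1))) (min w (1 - w)) ≤ c / (4 * (A + B + 1)) :=
        min_le_left _ _
      have h2 : 0 < min (c / (4 * (A + B + 1))) (min w (1 - w)) :=
        lt_min (by positivity) (lt_min hw0 (by linarith))
      have h3 : (0:ℚ) < 4 * (A + B + 1) := by linarith
      rw [← le_div_iff₀ h3]
      linarith
  have hexy : ∃ y : ℚ, w - η ≤ y ∧ y ≤ w + η ∧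
      y ∈ {y : ℚ | ∃ t ∈ U, y • a + (t - y) • b ∈ R} := by
    by_contra hcon
    push_neg at hcon
    exact hT a b ⟨0, h0T, 1, h1T, w - η, w + η, by linarith, by linarith, by linarith,
      fun y hy1 hy2 => by simpa using hcon y hy1 hy2⟩
  obtain ⟨y, hy1, hy2, t, htU, hxR⟩ := hexy
  refine ⟨y • a + (t - y) • b, hxR, ?_⟩
  intro i
  have ht : t ∈ Set.Ioo (1 - δ) (1 + δ) := hUsub htU
  have ht1 : |1 - t| < δ := abs_lt.mpr ⟨by linarith [ht.1, ht.2], by linarith [ht.1, ht.2]⟩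
  have hwy : |w - y| ≤ η := abs_le.mpr ⟨by linarith, by linarith⟩
  have happ : (y • a + (t - y) • b) i = y * a i + (t - y) * b i := by
    simp [Pi.add_apply, Pi.smul_apply, smul_eq_mul]
  rw [happ]
  have heq : (w * a i + (1 - w) * b i) - (y * a i + (t - y) * b i)
      = (w - y) * a i + ((1 - t) + (y - w)) * b i := by ring
  rw [heq]
  have hyw : |y - w| ≤ η := by rwa [abs_sub_comm]
  have e1 : |(w - y) * a i + ((1 - t) + (y - w)) * b i|
      ≤ |w - y| * |a i| + (|1 - t| + |y - w|) * |b i| := by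
    calc |(w - y) * a i + ((1 - t) + (y - w)) * b i|
        ≤ |(w - y) * a i| + |((1 - t) + (y - w)) * b i| := abs_add_le _ _
      _ = |w - y| * |a i| + |(1 - t) + (y - w)| * |b i| := by rw [abs_mul, abs_mul]
      _ ≤ |w - y| * |a i| + (|1 - t| + |y - w|) * |b i| := by
          gcongr
          exact abs_add_le _ _
  have e2 : |w - y| * |a i| + (|1 - t| + |y - w|) * |b i| ≤ η * A + (δ + η) * B := by
    have t1 : |w - y| * |a i| ≤ η * A :=
      mul_le_mul hwy (hAi i) (abs_nonneg _) (le_of_lt hη0)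
    have t2 : (|1 - t| + |y - w|) * |b i| ≤ (δ + η) * B :=
      mul_le_mul (by linarith) (hBi i) (abs_nonneg _) (by linarith)
    linarith
  have e3 : η * A + (δ + η) * B < c := by
    nlinarith [mul_nonneg (le_of_lt hη0) hA0, mul_nonneg (le_of_lt hη0) hB0,
      mul_nonneg (le_of_lt hδ0) hB0, mul_pos hη0 hδ0]
  linarith [e1, e2, e3]

private lemma dense7 {k : ℕ} (R : Set (Fin k → ℚ))
    (key : ∀ a ∈ R, ∀ b ∈ R, ∀ w : ℚ, 0 < w → w < 1 → ∀ c : ℚ, 0 < c →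
      ∃ x ∈ R, ∀ i, |(w * a i + (1 - w) * b i) - x i| < c) :
    ∀ (m : ℕ) (w : Fin m → ℚ) (pt : Fin m → Fin k → ℚ),
      (∀ i, 0 ≤ w i) → (∀ i, pt i ∈ R) → (∑ i, w i) = 1 →
      ∀ c : ℚ, 0 < c → ∃ x ∈ R, ∀ j, |(∑ i, w i • pt i) j - x j| < c := by
  intro m
  induction m with
  | zero =>
    intro w pt _ _ hsum
    simp at hsum
  | succ n ih =>
    intro w pt hw hpt hsum c hc
    have happ : ∀ j, (∑ i, w i • pt i) j = ∑ i, w i * pt i j := by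
      intro j; simp [Finset.sum_apply]
    have hsum' : w 0 + ∑ i : Fin n, w i.succ = 1 := by
      rw [← hsum, Fin.sum_univ_succ]
    by_cases hs : (∑ i : Fin n, w i.succ) = 0
    · -- tail weights all zero, p = pt 0
      have hzero : ∀ i : Fin n, w i.succ = 0 := by
        intro i
        have := (Finset.sum_eq_zero_iff_of_nonneg (fun j _ => hw j.succ)).mp hs
        exact this i (Finset.mem_univ i)
      have hw0 : w 0 = 1 := by rw [hs] at hsum'; linarith
      refine ⟨pt 0, hpt 0, fun j => ?_⟩
      have : (∑ i, w i • pt i) j = pt 0 j := by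
        rw [happ, Fin.sum_univ_succ, hw0, one_mul]
        have : (∑ i : Fin n, w i.succ * pt i.succ j) = 0 :=
          Finset.sum_eq_zero fun i _ => by rw [hzero i, zero_mul]
        rw [this, add_zero]
      rw [this]
      simpa using hc
    · have hspos : 0 < ∑ i : Fin n, w i.succ :=
        lt_of_le_of_ne (Finset.sum_nonneg fun i _ => hw i.succ) (Ne.symm hs)
      set s := ∑ i : Fin n, w i.succ with hsdef
      obtain ⟨b, hbR, hbq⟩ := ih (fun i => w i.succ / s) (fun i => pt i.succ)
        (fun i => div_nonneg (hw i.succ) (le_of_lt hspos)) (fun i => hpt i.succ)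
        (by rw [← Finset.sum_div, ← hsdef, div_self hs]) (c / 3) (by positivity)
      have hq : ∀ j, (∑ i : Fin n, (fun i => w i.succ / s) i • (fun i => pt i.succ) i) j
          = (∑ i : Fin n, w i.succ * pt i.succ j) / s := by
        intro j
        simp only [Finset.sum_apply, Pi.smul_apply, smul_eq_mul]
        rw [Finset.sum_div]
        congr 1
        ext i
        ring
      by_cases hw0 : w 0 = 0
      · -- p = q, since s = 1
        have hs1 : s = 1 := by rw [hw0] at hsum'; linarith
        refine ⟨b, hbR, fun j => ?_⟩
        have hpj : (∑ i, w i • pt i) j = (∑ i : Fin n, w i.succ * pt i.succ j) / s := by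
          rw [happ, Fin.sum_univ_succ, hw0, zero_mul, zero_add, hs1, div_one]
        have := hbq j
        rw [hq j] at this
        rw [hpj]
        linarith [this, hc]
      · have hw0pos : 0 < w 0 := lt_of_le_of_ne (hw 0) (Ne.symm hw0)
        have hw0lt : w 0 < 1 := by linarith
        obtain ⟨x, hxR, hx⟩ := key (pt 0) (hpt 0) b hbR (w 0) hw0pos hw0lt (c / 2)
          (by positivity)
        refine ⟨x, hxR, fun j => ?_⟩
        set Q : ℚ := (∑ i : Fin n, w i.succ * pt i.succ j) / s with hQdef
        have hpj : (∑ i, w i • pt i) j = w 0 * pt 0 j + s * Q := by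
          rw [happ, Fin.sum_univ_succ, hQdef, mul_div_cancel₀ _ hs]
        have hqb : |Q - b j| < c / 3 := by
          have := hbq j
          rw [hq j] at this
          exact this
        have hcomb : |(w 0 * pt 0 j + (1 - w 0) * b j) - x j| < c / 2 := hx j
        have hs1 : s = 1 - w 0 := by linarith
        have key2 : |(∑ i, w i • pt i) j - (w 0 * pt 0 j + (1 - w 0) * b j)|
            = (1 - w 0) * |Q - b j| := by
          rw [hpj, hs1]
          have : w 0 * pt 0 j + (1 - w 0) * Q - (w 0 * pt 0 j + (1 - w 0) * b j)
              = (1 - w 0) * (Q - b j) := by ring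
          rw [this, abs_mul, abs_of_nonneg (by linarith : (0:ℚ) ≤ 1 - w 0)]
        have hb1 : (1 - w 0) * |Q - b j| ≤ |Q - b j| := by
          nlinarith [abs_nonneg (Q - b j)]
        calc |(∑ i, w i • pt i) j - x j|
            ≤ |(∑ i, w i • pt i) j - (w 0 * pt 0 j + (1 - w 0) * b j)|
              + |(w 0 * pt 0 j + (1 - w 0) * b j) - x j| := abs_sub_le _ _ _
          _ < c := by rw [key2]; linarith

/-- Let R ⊆ ℚ^k be a nonempty semilinear set.  Suppose that for every rational
δ ∈ (0,1) there is a semilinear U_δ ⊆ ℚ with 1 ∈ U_δ ⊆ (1−δ, 1+δ) such that for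
all a, b ∈ ℚ^k, the set T = {y | ∃ t ∈ U_δ, y•a + (t−y)•b ∈ R} does not exclude
an interval.  Then R is dense in its convex hull. -/
theorem stmt7 {k : ℕ} (R : Set (Fin k → ℚ)) (hR : IsSemilinear k R) (hne : R.Nonempty)
    (h : ∀ δ : ℚ, 0 < δ → δ < 1 → ∃ U : Set ℚ, IsSemilinear1 U ∧ (1 : ℚ) ∈ U ∧
      U ⊆ Set.Ioo (1 - δ) (1 + δ) ∧
      ∀ a b : Fin k → ℚ,
        ¬ ExcludesInterval {y : ℚ | ∃ t ∈ U, y • a + (t - y) • b ∈ R}) :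
    ∀ p ∈ convHull' R, ∀ ε : ℚ, 0 < ε → ∃ x ∈ R, (∑ i, (p i - x i) ^ 2) < ε ^ 2 := by

  intro p hp ε hε
  obtain ⟨m, w, pt, hw, hpt, hsum, hpeq⟩ := hp
  have h' : ∀ δ : ℚ, 0 < δ → δ < 1 → ∃ U : Set ℚ, (1 : ℚ) ∈ U ∧
      U ⊆ Set.Ioo (1 - δ) (1 + δ) ∧
      ∀ a b : Fin k → ℚ,
        ¬ ExcludesInterval {y : ℚ | ∃ t ∈ U, y • a + (t - y) • b ∈ R} := by
    intro δ h1 h2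
    obtain ⟨U, _, hU1, hUsub, hUT⟩ := h δ h1 h2
    exact ⟨U, hU1, hUsub, hUT⟩
  have hkpos : (0:ℚ) < (k:ℚ) + 1 := by positivity
  have hcpos : (0:ℚ) < ε / ((k:ℚ) + 1) := by positivity
  obtain ⟨x, hxR, hx⟩ := dense7 R (fun a ha b hb => key7 R h' a ha b hb) m w pt hw hpt hsum
    (ε / ((k:ℚ) + 1)) hcpos
  refine ⟨x, hxR, ?_⟩
  have hbound : ∀ j, (p j - x j) ^ 2 ≤ (ε / ((k:ℚ) + 1)) ^ 2 := by
    intro j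
    have := hx j
    rw [← hpeq] at this
    have habs := abs_le.mp (le_of_lt this)
    exact sq_le_sq' habs.1 habs.2
  calc (∑ i, (p i - x i) ^ 2) ≤ ∑ _i : Fin k, (ε / ((k:ℚ) + 1)) ^ 2 :=
        Finset.sum_le_sum fun j _ => hbound j
    _ = (k : ℚ) * (ε / ((k:ℚ) + 1)) ^ 2 := by
        rw [Finset.sum_const, Finset.card_univ, Fintype.card_fin, nsmul_eq_mul]
    _ < ε ^ 2 := by
        rw [div_pow, ← mul_div_assoc, div_lt_iff₀ (by positivity)]
        have hk0 : (0:ℚ) ≤ (k:ℚ) := Nat.cast_nonneg k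
        nlinarith [pow_pos hε 2, sq_nonneg ((k:ℚ))]
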